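/- Let m ≥ 3, let A be an (m−1)×m integer matrix, let A′ be the bordered matrix of A, and let A″ be the bordered matrix of A′. Then d(A″) = −2·(d(A′),0) − (d(A),0,0) + d(A)_m·(0,…,0,1) in ℤ^{m+2}, where d(A)_m denotes the last component of d(A). -/
import Mathlib


/-- The degeneration vector of an `r × (r+1)` integer matrix `A`:
its `j`-th entry is `(-1)^j` times the determinant of the square matrix
obtained from `A` by deleting the `j`-th column (0-indexed). -/
def degVec {r : ℕ} (A : Matrix (Fin r) (Fin (r + 1)) ℤ) : Fin (r + 1) → ℤ :=
  fun j => (-1) ^ (j : ℕ) * (A.submatrix id j.succAbove).det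

/-- The bordered matrix of an `r × (r+1)` integer matrix `A`: `A` with the row
`(0, …, 0, 1, -2)` adjoined at the bottom and the column `(0, …, 0, 1, -2)ᵀ`
adjoined at the right. -/
def border {r : ℕ} (A : Matrix (Fin r) (Fin (r + 1)) ℤ) :
    Matrix (Fin (r + 1)) (Fin (r + 2)) ℤ :=
  Matrix.of fun i j =>
    if hi : (i : ℕ) < r then
      if hj : (j : ℕ) < r + 1 then A ⟨i, hi⟩ ⟨j, hj⟩
      else if (i : ℕ) = r - 1 then 1 else 0
    else
      if (j : ℕ) = r then 1 else if (j : ℕ) = r + 1 then -2 else 0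

section Aux

open Matrix Finset

lemma det_row_single {n : ℕ} (M : Matrix (Fin (n+1)) (Fin (n+1)) ℤ) (i a : Fin (n+1))
    (h : ∀ c, c ≠ a → M i c = 0) :
    M.det = (-1)^((i:ℕ)+(a:ℕ)) * M i a * (M.submatrix i.succAbove a.succAbove).det := by
  rw [Matrix.det_succ_row M i]
  rw [Finset.sum_eq_single a]
  · intro b _ hb; rw [h b hb]; ring
  · intro hb; exact absurd (mem_univ a) hb

lemma det_col_single {n : ℕ} (M : Matrix (Fin (n+1)) (Fin (n+1)) ℤ) (i a : Fin (n+1))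
    (h : ∀ c, c ≠ i → M c a = 0) :
    M.det = (-1)^((i:ℕ)+(a:ℕ)) * M i a * (M.submatrix i.succAbove a.succAbove).det := by
  rw [Matrix.det_succ_column M a]
  rw [Finset.sum_eq_single i]
  · intro b _ hb; rw [h b hb]; ring
  · intro hb; exact absurd (mem_univ i) hb

lemma det_row_pair {n : ℕ} (M : Matrix (Fin (n+1)) (Fin (n+1)) ℤ) (i a b : Fin (n+1))
    (hab : a ≠ b) (h : ∀ c, c ≠ a → c ≠ b → M i c = 0) :
    M.det = (-1)^((i:ℕ)+(a:ℕ)) * M i a * (M.submatrix i.succAbove a.succAbove).det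
      + (-1)^((i:ℕ)+(b:ℕ)) * M i b * (M.submatrix i.succAbove b.succAbove).det := by
  rw [Matrix.det_succ_row M i]
  calc (∑ j : Fin (n+1), (-1)^((i:ℕ)+(j:ℕ)) * M i j * (M.submatrix i.succAbove j.succAbove).det)
      = ∑ j ∈ ({a, b} : Finset (Fin (n+1))),
          (-1)^((i:ℕ)+(j:ℕ)) * M i j * (M.submatrix i.succAbove j.succAbove).det := by
        symm
        apply Finset.sum_subset (Finset.subset_univ _)
        intro c _ hc
        simp only [Finset.mem_insert, Finset.mem_singleton, not_or] at hc
        rw [h c hc.1 hc.2]; ring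
    _ = _ := Finset.sum_pair hab

lemma succAbove_val {n : ℕ} (p : Fin (n+1)) (c : Fin n) :
    ((p.succAbove c : Fin (n+1)) : ℕ) = if (c:ℕ) < (p:ℕ) then (c:ℕ) else (c:ℕ)+1 := by
  unfold Fin.succAbove
  split_ifs with h h' h' <;>
    simp_all [Fin.lt_def]

lemma border_castSucc {r : ℕ} (A : Matrix (Fin (r+1)) (Fin (r+2)) ℤ)
    (i : Fin (r+1)) (x : Fin (r+2)) : border A i.castSucc x.castSucc = A i x := by
  simp only [border, Matrix.of_apply, Fin.coe_castSucc]
  rw [dif_pos i.isLt, dif_pos x.isLt]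

lemma border_col_last {r : ℕ} (A : Matrix (Fin (r+1)) (Fin (r+2)) ℤ)
    (i : Fin (r+1)) : border A i.castSucc (Fin.last (r+2)) = if (i:ℕ) = r then 1 else 0 := by
  simp only [border, Matrix.of_apply, Fin.coe_castSucc, Fin.val_last]
  rw [dif_pos i.isLt, dif_neg (by omega)]
  simp

lemma border_row_last {r : ℕ} (A : Matrix (Fin (r+1)) (Fin (r+2)) ℤ)
    (x : Fin (r+3)) :
    border A (Fin.last (r+1)) x = if (x:ℕ) = r+1 then 1 else if (x:ℕ) = r+2 then -2 else 0 := by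
  simp only [border, Matrix.of_apply, Fin.val_last]
  rw [dif_neg (by omega)]

lemma trunc_border {r : ℕ} (A : Matrix (Fin (r+1)) (Fin (r+2)) ℤ) :
    (border A).submatrix Fin.castSucc Fin.castSucc = A := by
  ext i x
  exact border_castSucc A i x

/-- Step lemma at the last index. -/
lemma degVec_border_last {r : ℕ} (A : Matrix (Fin (r+1)) (Fin (r+2)) ℤ) :
    degVec (border A) (Fin.last (r+2)) = - degVec A (Fin.last (r+1)) := by
  unfold degVec
  have hM : ((border A).submatrix id (Fin.last (r+2)).succAbove).det
      = (A.submatrix id (Fin.last (r+1)).succAbove).det := by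
    rw [Fin.succAbove_last]
    rw [det_row_single _ (Fin.last (r+1)) (Fin.last (r+1))
      (fun c hc => by
        have h1 : (c:ℕ) ≠ r+1 := fun h => hc (Fin.ext (by simp [h]))
        have h3 : (c:ℕ) ≠ r+2 := by have := c.isLt; omega
        rw [Matrix.submatrix_apply, id_eq, border_row_last]
        simp only [Fin.coe_castSucc]
        rw [if_neg h1, if_neg h3])]
    rw [Matrix.submatrix_apply, id_eq]
    have h1 : border A (Fin.last (r+1)) ((Fin.last (r+1)).castSucc) = 1 := by
      rw [border_row_last]; simp
    rw [h1]
    have h2 : (-1:ℤ)^((Fin.last (r+1) : ℕ) + (Fin.last (r+1) : ℕ)) = 1 :=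
      Even.neg_one_pow ⟨r+1, by simp [Fin.val_last]⟩
    rw [h2, one_mul, one_mul]
    congr 1
    ext i x
    simp only [Matrix.submatrix_apply, Fin.succAbove_last, id_eq, Function.comp]
    exact border_castSucc A i x.castSucc
  rw [hM]
  have : (-1:ℤ)^((Fin.last (r+2) : ℕ)) = -(-1)^((Fin.last (r+1) : ℕ)) := by
    simp [Fin.val_last, pow_succ]
  rw [this]; ring

/-- Step lemma at the second-to-last index. -/
lemma degVec_border_sublast {r : ℕ} (A : Matrix (Fin (r+1)) (Fin (r+2)) ℤ) :
    degVec (border A) ((Fin.last (r+1)).castSucc) = -2 * degVec A (Fin.last (r+1)) := by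
  unfold degVec
  set j : Fin (r+3) := (Fin.last (r+1)).castSucc with hjdef
  have hj : (j : ℕ) = r+1 := by simp [hjdef]
  have hM : ((border A).submatrix id j.succAbove).det
      = -2 * (A.submatrix id (Fin.last (r+1)).succAbove).det := by
    rw [det_row_single _ (Fin.last (r+1)) (Fin.last (r+1))
      (fun c hc => by
        have hcv : (c:ℕ) < r+1 := by
          have := c.isLt
          rcases Nat.lt_succ_iff_lt_or_eq.mp this with h | h
          · exact h
          · exact absurd (Fin.ext (by simp [h])) hc
        have hval : ((j.succAbove c) : ℕ) = (c:ℕ) := by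
          rw [succAbove_val, if_pos (by omega)]
        rw [Matrix.submatrix_apply, id_eq, border_row_last, hval,
          if_neg (by omega), if_neg (by omega)])]
    have hval : ((j.succAbove (Fin.last (r+1))) : ℕ) = r+2 := by
      rw [succAbove_val, if_neg (by simp [hj])]
      simp
    rw [Matrix.submatrix_apply, id_eq, border_row_last, hval,
      if_neg (by omega), if_pos rfl]
    have h2 : (-1:ℤ)^((Fin.last (r+1) : ℕ) + (Fin.last (r+1) : ℕ)) = 1 :=
      Even.neg_one_pow ⟨r+1, by simp [Fin.val_last]⟩
    rw [h2, one_mul]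
    have hmin : (((border A).submatrix id j.succAbove).submatrix
        (Fin.last (r+1)).succAbove (Fin.last (r+1)).succAbove)
        = A.submatrix id (Fin.last (r+1)).succAbove := by
      ext i x
      simp only [Matrix.submatrix_apply, Matrix.submatrix_submatrix, Function.comp_apply, id_eq,
        Fin.succAbove_last]
      rw [hjdef, Fin.castSucc_succAbove_castSucc, Fin.succAbove_last_apply]
      exact border_castSucc A i x.castSucc
    rw [hmin]
  rw [hM, hj]
  have : (-1:ℤ)^(r+1) = (-1)^((Fin.last (r+1) : ℕ)) := by simp
  rw [this]; ring

/-- Step lemma at an index `< r+1`. -/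
lemma degVec_border_castSucc {r : ℕ} (A : Matrix (Fin (r+1)) (Fin (r+2)) ℤ) (j₀ : Fin (r+1)) :
    degVec (border A) (j₀.castSucc.castSucc) =
      -2 * degVec A j₀.castSucc - degVec (A.submatrix Fin.castSucc Fin.castSucc) j₀ := by
  unfold degVec
  set j : Fin (r+3) := j₀.castSucc.castSucc with hjdef
  have hj : (j : ℕ) = (j₀ : ℕ) := by simp [hjdef]
  have hj₀ : (j₀ : ℕ) < r+1 := j₀.isLt
  set a : Fin (r+2) := (Fin.last r).castSucc with hadef
  set b : Fin (r+2) := Fin.last (r+1) with hbdef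
  have hav : (a : ℕ) = r := by simp [hadef]
  have hbv : (b : ℕ) = r+1 := by simp [hbdef]
  have hab : a ≠ b := fun h => by rw [h] at hav; omega
  have hvala : ((j.succAbove a) : ℕ) = r+1 := by
    rw [succAbove_val, if_neg (by omega)]; omega
  have hvalb : ((j.succAbove b) : ℕ) = r+2 := by
    rw [succAbove_val, if_neg (by omega)]; omega
  have hM : ((border A).submatrix id j.succAbove).det =
      (-1)^((Fin.last (r+1) : ℕ)+(a:ℕ)) * 1 *
        (((border A).submatrix id j.succAbove).submatrix
          (Fin.last (r+1)).succAbove a.succAbove).det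
      + (-1)^((Fin.last (r+1) : ℕ)+(b:ℕ)) * (-2) *
        (((border A).submatrix id j.succAbove).submatrix
          (Fin.last (r+1)).succAbove b.succAbove).det := by
    rw [det_row_pair _ (Fin.last (r+1)) a b hab
      (fun c hca hcb => by
        have hc1 : (c:ℕ) ≠ r := fun h => hca (Fin.ext (by rw [h, hav]))
        have hc2 : (c:ℕ) ≠ r+1 := fun h => hcb (Fin.ext (by rw [h, hbv]))
        have hcv : (c:ℕ) < r := by have := c.isLt; omega
        have hval : ((j.succAbove c) : ℕ) ≤ r := by
          rw [succAbove_val]; split_ifs <;> omega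
        rw [Matrix.submatrix_apply, id_eq, border_row_last,
          if_neg (by omega), if_neg (by omega)])]
    congr 2
    · rw [Matrix.submatrix_apply, id_eq, border_row_last, hvala, if_pos rfl]
    · rw [Matrix.submatrix_apply, id_eq, border_row_last, hvalb,
        if_neg (by omega), if_pos rfl]
  -- the `b`-minor is `A` with column `j₀` (as index of `Fin (r+2)`) deleted
  have hMb : (((border A).submatrix id j.succAbove).submatrix
      (Fin.last (r+1)).succAbove b.succAbove)
      = A.submatrix id (j₀.castSucc).succAbove := by
    ext i x
    simp only [Matrix.submatrix_apply, Matrix.submatrix_submatrix, Function.comp_apply, id_eq,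
      hbdef, Fin.succAbove_last]
    rw [hjdef, Fin.castSucc_succAbove_castSucc]
    exact border_castSucc A i _
  -- the `a`-minor: expand along its last column
  have hMa : (((border A).submatrix id j.succAbove).submatrix
      (Fin.last (r+1)).succAbove a.succAbove).det
      = ((A.submatrix Fin.castSucc Fin.castSucc).submatrix id j₀.succAbove).det := by
    have hlastcol : ∀ c : Fin (r+1),
        (((border A).submatrix id j.succAbove).submatrix
          (Fin.last (r+1)).succAbove a.succAbove) c (Fin.last r)
        = if (c : ℕ) = r then 1 else 0 := by
      intro c
      simp only [Matrix.submatrix_apply, Matrix.submatrix_submatrix, Function.comp_apply, id_eq,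
        Fin.succAbove_last]
      rw [hadef, Fin.succAbove_castSucc_self, Fin.succ_last]
      have : j.succAbove (Fin.last (r+1)) = Fin.last (r+2) := by
        apply Fin.ext
        rw [succAbove_val, if_neg (by simp [hj])]
        simp
      rw [this]
      exact border_col_last A c
    rw [det_col_single _ (Fin.last r) (Fin.last r)
      (fun c hc => by
        rw [hlastcol c, if_neg (fun h => hc (Fin.ext (by simp [h])))])]
    rw [hlastcol (Fin.last r), if_pos (by simp)]
    have h3 : (-1:ℤ)^((Fin.last r : ℕ) + (Fin.last r : ℕ)) = 1 :=
      Even.neg_one_pow ⟨r, by simp [Fin.val_last]⟩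
    rw [h3, one_mul, one_mul]
    congr 1
    ext i x
    simp only [Matrix.submatrix_apply, Matrix.submatrix_submatrix, Function.comp_apply, id_eq,
      Fin.succAbove_last]
    rw [hadef, Fin.castSucc_succAbove_castSucc, Fin.succAbove_last_apply,
      hjdef, Fin.castSucc_succAbove_castSucc, Fin.castSucc_succAbove_castSucc]
    exact border_castSucc A _ _
  rw [hM, hMa, hMb, hj, hav, hbv]
  have e1 : (-1:ℤ)^((r+1)+r) = -1 := Odd.neg_one_pow ⟨r, by ring⟩
  have e2 : (-1:ℤ)^((r+1)+(r+1)) = 1 := Even.neg_one_pow ⟨r+1, by ring⟩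
  simp only [Fin.val_last, Fin.coe_castSucc, e1, e2]
  ring

end Aux

/-- Here `m = k + 3 ≥ 3`, `A` is an `(m-1) × m` integer matrix,
`A' = border A` and `A'' = border A'`.  Then
`d(A'') = -2·(d(A'),0) - (d(A),0,0) + d(A)_m·(0,…,0,1)` in `ℤ^{m+2}`. -/
theorem stmt1 (k : ℕ) (A : Matrix (Fin (k + 2)) (Fin (k + 3)) ℤ) :
    degVec (border (border A)) =
      (-2 : ℤ) • Fin.snoc (degVec (border A)) 0
        - Fin.snoc (Fin.snoc (degVec A) 0) 0
        + degVec A (Fin.last (k + 2)) • Pi.single (Fin.last (k + 4)) 1 := by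
  funext j
  simp only [Pi.add_apply, Pi.sub_apply, Pi.smul_apply, smul_eq_mul]
  induction j using Fin.lastCases with
  | last =>

    rw [degVec_border_last (border A), degVec_border_last A]
    simp only [Fin.snoc_last, Pi.single_eq_same]
    have : Fin.last (k+1+1) = Fin.last (k+2) := rfl
    rw [this]; ring
  | cast j' =>
    induction j' using Fin.lastCases with
    | last =>
      rw [degVec_border_sublast (border A)]
      rw [Pi.single_eq_of_ne (Fin.castSucc_lt_last _).ne]
      simp only [Fin.snoc_castSucc, Fin.snoc_last]
      have : Fin.last (k+2+1) = Fin.last (k+3) := rfl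
      rw [this]; ring
    | cast j₀ =>
      rw [degVec_border_castSucc (border A) j₀, trunc_border A]
      rw [Pi.single_eq_of_ne (Fin.castSucc_lt_last _).ne]
      simp only [Fin.snoc_castSucc]
      ring
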